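/- Two-step stabilization additivity of sink counts: fix instruction stacks and particle locations; let S₁ be the number of particles absorbed at the sinks after stabilizing the first m₁ particles on {1,...,n}, and S' the number of additional particles absorbed after adding m₂ further particles (waking any sleepers they meet) and restabilizing. Then S₁ + S' equals the number S of particles absorbed when all m₁ + m₂ particles are placed at once and the system is stabilized. -/

import Mathlib

/-- An activated random walk instruction. -/
inductive ArwInstr
  | left
  | right
  | sleep
deriving DecidableEq

/-- A state of activated random walk: the number of active particles at each site,
and whether the site holds a (single) sleeping particle. -/
structure ArwState where
  active : ℤ → ℕ
  asleep : ℤ → Bool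

/-- One active particle arrives at site `w`, waking a sleeping particle if present. -/
def arrive (st : ArwState) (w : ℤ) : ArwState where
  active := Function.update st.active w (st.active w + (if st.asleep w then 2 else 1))
  asleep := Function.update st.asleep w false

/-- Topple site `v`: execute its next unused instruction (`u v` instructions have been
used so far, the stacks being indexed from `1`). A `sleep` instruction puts a lone
active particle to sleep and is otherwise a no-op. -/
def topple (I : ℤ → ℕ → ArwInstr) (u : ℤ → ℕ) (st : ArwState) (v : ℤ) : ArwState :=
  match I v (u v + 1) with
  | .left  => arrive { st with active := Function.update st.active v (st.active v - 1) } (v - 1)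
  | .right => arrive { st with active := Function.update st.active v (st.active v - 1) } (v + 1)
  | .sleep =>
      if st.active v = 1 ∧ st.asleep v = false then
        { active := Function.update st.active v 0,
          asleep := Function.update st.asleep v true }
      else st

/-- Run a sequence of topplings, tracking the odometer `u` and the state. -/
def runArw (I : ℤ → ℕ → ArwInstr) : List ℤ → (ℤ → ℕ) × ArwState → (ℤ → ℕ) × ArwState
  | [], p => p
  | v :: rest, (u, st) =>
      runArw I rest (Function.update u v (u v + 1), topple I u st v)

/-- A toppling sequence is legal if each toppled site holds an active particle
at the time it is toppled. -/
def LegalSeq (I : ℤ → ℕ → ArwInstr) : List ℤ → (ℤ → ℕ) → ArwState → Prop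
  | [], _, _ => True
  | v :: rest, u, st =>
      1 ≤ st.active v ∧ LegalSeq I rest (Function.update u v (u v + 1)) (topple I u st v)

/-- The initial state of the configuration `σ`, with no sleeping particles. -/
def initState (σ : ℤ → ℕ) : ArwState := ⟨σ, fun _ => false⟩

/-- A toppling sequence stabilizes `V` if it only topples sites of `V`, is legal from
the initial configuration `σ` (with no sleeping particles), and afterwards no site of
`V` holds an active particle. -/
def Stabilizes (I : ℤ → ℕ → ArwInstr) (σ : ℤ → ℕ) (V : Set ℤ) (seq : List ℤ) : Prop :=
  (∀ v ∈ seq, v ∈ V) ∧ LegalSeq I seq 0 (initState σ) ∧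
    ∀ v ∈ V, (runArw I seq (0, initState σ)).2.active v = 0


/-- Add `τ v` new active particles at each site `v`, waking any sleeping particle at a
site that receives at least one new particle. -/
def addParticles (st : ArwState) (τ : ℤ → ℕ) : ArwState where
  active := fun v =>
    st.active v + τ v + (if st.asleep v = true ∧ 1 ≤ τ v then 1 else 0)
  asleep := fun v => st.asleep v && (τ v == 0)

/-- The number of particles absorbed at the sinks `0` and `n+1` in a state. -/
def sinkCount (n : ℕ) (st : ArwState) : ℕ :=
  st.active 0 + st.active ((n : ℤ) + 1)

section AuxArw

variable (I : ℤ → ℕ → ArwInstr)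

lemma ArwState.ext' {a b : ArwState} (h1 : a.active = b.active)
    (h2 : a.asleep = b.asleep) : a = b := by
  cases a; cases b; simp_all

/-- Abstract step: execute instruction `a` at site `v`. -/
def arwStep (a : ArwInstr) (v : ℤ) (st : ArwState) : ArwState :=
  match a with
  | .left  => arrive ⟨Function.update st.active v (st.active v - 1), st.asleep⟩ (v - 1)
  | .right => arrive ⟨Function.update st.active v (st.active v - 1), st.asleep⟩ (v + 1)
  | .sleep =>
      if st.active v = 1 ∧ st.asleep v = false then
        ⟨Function.update st.active v 0, Function.update st.asleep v true⟩
      else st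

lemma topple_eq_step (u : ℤ → ℕ) (st : ArwState) (v : ℤ) :
    topple I u st v = arwStep (I v (u v + 1)) v st := by
  cases h : I v (u v + 1) <;> simp [topple, arwStep, h]

def arwMove (v t : ℤ) (st : ArwState) : ArwState :=
  arrive ⟨Function.update st.active v (st.active v - 1), st.asleep⟩ t

def arwSleep (v : ℤ) (st : ArwState) : ArwState :=
  if st.active v = 1 ∧ st.asleep v = false then
    ⟨Function.update st.active v 0, Function.update st.asleep v true⟩
  else st

set_option maxHeartbeats 2000000 in
set_option maxRecDepth 100000 in
lemma arwMove_comm {v w : ℤ} (t t' : ℤ) (hvw : v ≠ w) (st : ArwState)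
    (hv : 1 ≤ st.active v) (hw : 1 ≤ st.active w) :
    arwMove w t' (arwMove v t st) = arwMove v t (arwMove w t' st) := by
  apply ArwState.ext' <;> funext x <;>
    simp only [arwMove, arrive, Function.update_apply] <;>
    split_ifs <;> first | rfl | omega | (subst_vars; simp_all)

set_option maxHeartbeats 2000000 in
set_option maxRecDepth 100000 in
lemma arwSleep_move_comm {v w : ℤ} (t : ℤ) (hvw : v ≠ w) (st : ArwState)
    (hv : 1 ≤ st.active v) (hw : 1 ≤ st.active w) :
    arwSleep w (arwMove v t st) = arwMove v t (arwSleep w st) := by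
  simp only [arwSleep, arwMove, arrive, Function.update_apply]
  split_ifs <;>
    (apply ArwState.ext' <;> funext x <;>
      simp only [Function.update_apply] <;>
      (try split_ifs) <;>
      first | rfl | omega | (subst_vars; simp_all))

set_option maxHeartbeats 2000000 in
set_option maxRecDepth 100000 in
lemma arwSleep_sleep_comm {v w : ℤ} (hvw : v ≠ w) (st : ArwState) :
    arwSleep w (arwSleep v st) = arwSleep v (arwSleep w st) := by
  simp only [arwSleep, Function.update_apply]
  split_ifs <;>
    (try (apply ArwState.ext' <;> funext x <;>
      simp only [Function.update_apply] <;>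
      (try split_ifs) <;>
      first | rfl | omega | (subst_vars; simp_all)))

lemma arwStep_comm (a b : ArwInstr) {v w : ℤ} (hvw : v ≠ w) (st : ArwState)
    (hv : 1 ≤ st.active v) (hw : 1 ≤ st.active w) :
    arwStep b w (arwStep a v st) = arwStep a v (arwStep b w st) := by
  have hmv : ∀ (t : ℤ) (st' : ArwState), arwStep ArwInstr.left t st' = arwMove t (t - 1) st' :=
    fun _ _ => rfl
  have hmr : ∀ (t : ℤ) (st' : ArwState), arwStep ArwInstr.right t st' = arwMove t (t + 1) st' :=
    fun _ _ => rfl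
  have hms : ∀ (t : ℤ) (st' : ArwState), arwStep ArwInstr.sleep t st' = arwSleep t st' :=
    fun _ _ => rfl
  cases a <;> cases b
  · rw [hmv, hmv, hmv, hmv]; exact arwMove_comm _ _ hvw st hv hw
  · rw [hmv, hmr, hmv, hmr]; exact arwMove_comm _ _ hvw st hv hw
  · rw [hmv, hms, hmv, hms]; exact arwSleep_move_comm _ hvw st hv hw
  · rw [hmr, hmv, hmr, hmv]; exact arwMove_comm _ _ hvw st hv hw
  · rw [hmr, hmr, hmr, hmr]; exact arwMove_comm _ _ hvw st hv hw
  · rw [hmr, hms, hmr, hms]; exact arwSleep_move_comm _ hvw st hv hw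
  · rw [hms, hmv, hms, hmv]; exact (arwSleep_move_comm _ hvw.symm st hw hv).symm
  · rw [hms, hmr, hms, hmr]; exact (arwSleep_move_comm _ hvw.symm st hw hv).symm
  · rw [hms, hms, hms, hms]; exact arwSleep_sleep_comm hvw st

lemma topple_comm (u : ℤ → ℕ) {v w : ℤ} (hvw : v ≠ w) (st : ArwState)
    (hv : 1 ≤ st.active v) (hw : 1 ≤ st.active w) :
    topple I (Function.update u v (u v + 1)) (topple I u st v) w
      = topple I (Function.update u w (u w + 1)) (topple I u st w) v := by
  rw [topple_eq_step I u st v, topple_eq_step I u st w,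
    topple_eq_step I (Function.update u v (u v + 1)),
    topple_eq_step I (Function.update u w (u w + 1))]
  rw [Function.update_of_ne (Ne.symm hvw), Function.update_of_ne hvw]
  exact arwStep_comm (I v (u v + 1)) (I w (u w + 1)) hvw st hv hw

lemma runArw_pair_swap {v w : ℤ} (hvw : v ≠ w) (u : ℤ → ℕ) (st : ArwState)
    (hv : 1 ≤ st.active v) (hw : 1 ≤ st.active w) :
    runArw I [w, v] (u, st) = runArw I [v, w] (u, st) := by
  simp only [runArw]
  refine Prod.ext ?_ ?_
  · show Function.update (Function.update u w (u w + 1)) v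
        (Function.update u w (u w + 1) v + 1)
      = Function.update (Function.update u v (u v + 1)) w
        (Function.update u v (u v + 1) w + 1)
    rw [Function.update_of_ne hvw, Function.update_of_ne (Ne.symm hvw),
      Function.update_comm hvw]
  · exact (topple_comm I u hvw st hv hw).symm

lemma topple_active_mono {v w : ℤ} (hvw : v ≠ w) (u : ℤ → ℕ) (st : ArwState) :
    st.active v ≤ (topple I u st w).active v := by
  rw [topple_eq_step]
  cases I w (u w + 1) <;>
    simp only [arwStep, arrive, Function.update_apply] <;>
    (try split_ifs) <;>
    first | rfl | omega | (subst_vars; simp_all) | (simp only [Function.update_apply]; split_ifs <;> first | omega | (subst_vars; simp_all))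

lemma run_active_mono (v : ℤ) (seq : List ℤ) : ∀ (u : ℤ → ℕ) (st : ArwState),
    v ∉ seq → st.active v ≤ (runArw I seq (u, st)).2.active v := by
  induction seq with
  | nil => intro u st _; exact le_rfl
  | cons w rest ih =>
      intro u st hn
      have hvw : v ≠ w := fun h => hn (h ▸ List.mem_cons_self)
      calc st.active v ≤ (topple I u st w).active v := topple_active_mono I hvw u st
        _ ≤ _ := ih _ _ (fun h => hn (List.mem_cons_of_mem _ h))

lemma runArw_append (a b : List ℤ) : ∀ p, runArw I (a ++ b) p = runArw I b (runArw I a p) := by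
  induction a with
  | nil => intro p; rfl
  | cons v rest ih =>
      intro p
      rcases p with ⟨u, st⟩
      simp only [List.cons_append, runArw]
      exact ih _

lemma legal_append (a b : List ℤ) : ∀ (u : ℤ → ℕ) (st : ArwState),
    LegalSeq I (a ++ b) u st ↔
      LegalSeq I a u st ∧
        LegalSeq I b (runArw I a (u, st)).1 (runArw I a (u, st)).2 := by
  induction a with
  | nil => intro u st; simp [LegalSeq, runArw]
  | cons v rest ih =>
      intro u st
      simp only [List.cons_append, LegalSeq, runArw, List.append_eq, ih, and_assoc]

lemma exists_first_split {v : ℤ} : ∀ {l : List ℤ}, v ∈ l →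
    ∃ s t, l = s ++ v :: t ∧ v ∉ s := by
  intro l
  induction l with
  | nil => intro h; cases h
  | cons w rest ih =>
      intro h
      by_cases hw : v = w
      · exact ⟨[], rest, by simp [hw], by simp⟩
      · obtain ⟨s, t, hst, hns⟩ :=
          ih (by rcases List.mem_cons.mp h with h | h; exact absurd h hw; exact h)
        exact ⟨w :: s, t, by simp [hst], by simp [hns, hw]⟩

lemma move_front {v : ℤ} : ∀ (β₁ : List ℤ), v ∉ β₁ → ∀ (β₂ : List ℤ) (u : ℤ → ℕ)
    (st : ArwState), 1 ≤ st.active v → LegalSeq I (β₁ ++ v :: β₂) u st →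
    LegalSeq I (v :: (β₁ ++ β₂)) u st ∧
      runArw I (v :: (β₁ ++ β₂)) (u, st) = runArw I (β₁ ++ v :: β₂) (u, st) := by
  intro β₁
  induction β₁ with
  | nil => intro _ β₂ u st hv hleg; exact ⟨hleg, rfl⟩
  | cons w γ ih =>
      intro hnot β₂ u st hv hleg
      have hvw : v ≠ w := fun h => hnot (h ▸ List.mem_cons_self)
      have hnotγ : v ∉ γ := fun h => hnot (List.mem_cons_of_mem _ h)
      obtain ⟨hw, hrest⟩ := hleg
      have hv' : 1 ≤ (topple I u st w).active v :=
        le_trans hv (topple_active_mono I hvw u st)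
      obtain ⟨hlegIH, hrunIH⟩ :=
        ih hnotγ β₂ (Function.update u w (u w + 1)) (topple I u st w) hv' hrest
      have hswap := runArw_pair_swap I hvw u st hv hw
      obtain ⟨hv1, hlegtail⟩ := hlegIH
      have hlegtail' : LegalSeq I (γ ++ β₂) (runArw I [w, v] (u, st)).1
          (runArw I [w, v] (u, st)).2 := hlegtail
      rw [hswap] at hlegtail'
      constructor
      · exact ⟨hv, le_trans hw (topple_active_mono I (Ne.symm hvw) u st), hlegtail'⟩
      · have h1 : runArw I (v :: ((w :: γ) ++ β₂)) (u, st)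
            = runArw I (γ ++ β₂) (runArw I [v, w] (u, st)) := rfl
        have h2 : runArw I ((w :: γ) ++ v :: β₂) (u, st)
            = runArw I (γ ++ v :: β₂) (Function.update u w (u w + 1), topple I u st w) := rfl
        have h3 : runArw I (v :: (γ ++ β₂)) (Function.update u w (u w + 1), topple I u st w)
            = runArw I (γ ++ β₂) (runArw I [w, v] (u, st)) := rfl
        rw [h1, h2, ← hrunIH, h3, hswap]

lemma arw_abelian (V : Set ℤ) : ∀ (α : List ℤ) (u : ℤ → ℕ) (st : ArwState) (β : List ℤ),
    (∀ x ∈ α, x ∈ V) → LegalSeq I α u st →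
    (∀ x ∈ V, (runArw I α (u, st)).2.active x = 0) →
    (∀ x ∈ β, x ∈ V) → LegalSeq I β u st →
    (∀ x ∈ V, (runArw I β (u, st)).2.active x = 0) →
    runArw I α (u, st) = runArw I β (u, st) := by
  intro α
  induction α with
  | nil =>
      intro u st β _ _ hαstab hβV hβleg _
      cases β with
      | nil => rfl
      | cons w γ =>
          exfalso
          have h1 : 1 ≤ st.active w := hβleg.1
          have h0 : st.active w = 0 := hαstab w (hβV w (List.mem_cons_self))
          omega
  | cons v α' ih =>
      intro u st β hαV hαleg hαstab hβV hβleg hβstab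
      have hv : 1 ≤ st.active v := hαleg.1
      have hvV : v ∈ V := hαV v (List.mem_cons_self)
      have hvβ : v ∈ β := by
        by_contra hn
        have hmono := run_active_mono I v β u st hn
        have h0 := hβstab v hvV
        omega
      obtain ⟨β₁, β₂, rfl, hnot⟩ := exists_first_split hvβ
      obtain ⟨hlegmoved, hrunmoved⟩ := move_front I β₁ hnot β₂ u st hv hβleg
      obtain ⟨_, hlegtail⟩ := hlegmoved
      have key := ih (Function.update u v (u v + 1)) (topple I u st v) (β₁ ++ β₂)
        (fun x hx => hαV x (List.mem_cons_of_mem _ hx)) hαleg.2 hαstab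
        (fun x hx => by
          rcases List.mem_append.mp hx with h | h
          · exact hβV x (List.mem_append.mpr (Or.inl h))
          · exact hβV x (List.mem_append.mpr (Or.inr (List.mem_cons_of_mem _ h))))
        hlegtail
        (fun x hx => by
          have heq : runArw I (β₁ ++ β₂) (Function.update u v (u v + 1), topple I u st v)
              = runArw I (β₁ ++ v :: β₂) (u, st) := hrunmoved
          rw [heq]
          exact hβstab x hx)
      calc runArw I (v :: α') (u, st)
          = runArw I α' (Function.update u v (u v + 1), topple I u st v) := rfl
        _ = runArw I (β₁ ++ β₂) (Function.update u v (u v + 1), topple I u st v) := key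
        _ = runArw I (β₁ ++ v :: β₂) (u, st) := hrunmoved

set_option maxHeartbeats 2000000 in
set_option maxRecDepth 100000 in
lemma arrive_addP (st : ArwState) (τ : ℤ → ℕ) (t : ℤ) :
    arrive (addParticles st τ) t = addParticles (arrive st t) τ := by
  apply ArwState.ext' <;> funext x <;>
    simp only [arrive, addParticles, Function.update_apply] <;>
    (try split_ifs) <;>
    first | rfl | omega | (subst_vars; simp_all; try omega)

set_option maxHeartbeats 2000000 in
set_option maxRecDepth 100000 in
lemma topple_addP (u : ℤ → ℕ) (st : ArwState) (v : ℤ) (τ : ℤ → ℕ)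
    (hv : 1 ≤ st.active v) :
    topple I u (addParticles st τ) v = addParticles (topple I u st v) τ := by
  rw [topple_eq_step, topple_eq_step]
  have hdec : (⟨Function.update (addParticles st τ).active v
        ((addParticles st τ).active v - 1), (addParticles st τ).asleep⟩ : ArwState)
      = addParticles ⟨Function.update st.active v (st.active v - 1), st.asleep⟩ τ := by
    apply ArwState.ext'
    · funext x
      simp only [addParticles, Function.update_apply]
      split_ifs <;> first | rfl | omega | (subst_vars; simp_all; try omega)
    · rfl
  cases I v (u v + 1) with
  | left => show arrive _ _ = _; rw [hdec, arrive_addP]; rfl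
  | right => show arrive _ _ = _; rw [hdec, arrive_addP]; rfl
  | sleep =>
      show arwSleep v (addParticles st τ) = addParticles (arwSleep v st) τ
      by_cases hc : st.active v = 1 ∧ st.asleep v = false
      · by_cases hτ : τ v = 0
        · rw [arwSleep, arwSleep, if_pos hc, if_pos ?_]
          · apply ArwState.ext' <;> funext x <;>
              simp only [addParticles, Function.update_apply] <;>
              (try split_ifs) <;>
              first | rfl | omega | (subst_vars; simp_all; try omega)
          · constructor
            · simp only [addParticles]; rw [hc.2]; simp [hτ, hc.1]
            · simp only [addParticles]; rw [hc.2]; simp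
        · rw [arwSleep, arwSleep, if_pos hc, if_neg ?_]
          · apply ArwState.ext' <;> funext x <;>
              simp only [addParticles, Function.update_apply] <;>
              (try split_ifs) <;>
              first | rfl | omega | (subst_vars; simp_all; try omega)
          · intro hcon
            have h1 := hcon.1
            simp only [addParticles] at h1
            split_ifs at h1 <;> omega
      · rw [arwSleep, arwSleep, if_neg hc, if_neg ?_]
        intro hcon
        obtain ⟨h1, h2⟩ := hcon
        simp only [addParticles] at h1 h2
        by_cases ha : st.asleep v = true
        · by_cases hτ : τ v = 0
          · simp [ha, hτ] at h2
          · simp [ha, Nat.one_le_iff_ne_zero.mpr hτ] at h1; omega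
        · simp only [Bool.not_eq_true] at ha
          refine hc ⟨?_, ha⟩
          simp [ha] at h1
          omega

lemma run_addP (τ : ℤ → ℕ) : ∀ (seq : List ℤ) (u : ℤ → ℕ) (st : ArwState),
    LegalSeq I seq u st →
    runArw I seq (u, addParticles st τ)
        = ((runArw I seq (u, st)).1, addParticles (runArw I seq (u, st)).2 τ) ∧
      LegalSeq I seq u (addParticles st τ) := by
  intro seq
  induction seq with
  | nil => intro u st _; exact ⟨rfl, trivial⟩
  | cons v rest ih =>
      intro u st hleg
      obtain ⟨hv, hrest⟩ := hleg
      have hv' : 1 ≤ (addParticles st τ).active v := by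
        simp only [addParticles]; split_ifs <;> omega
      have hstep := topple_addP I u st v τ hv
      obtain ⟨hrun, hlegres⟩ := ih (Function.update u v (u v + 1)) (topple I u st v) hrest
      refine ⟨?_, hv', by rw [hstep]; exact hlegres⟩
      show runArw I rest (Function.update u v (u v + 1), topple I u (addParticles st τ) v) = _
      rw [hstep, hrun]
      rfl

lemma initState_add (σ₁ σ₂ : ℤ → ℕ) :
    initState (fun v => σ₁ v + σ₂ v) = addParticles (initState σ₁) σ₂ := by
  apply ArwState.ext'
  · funext x; simp [initState, addParticles]
  · funext x; simp [initState, addParticles]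

end AuxArw


/-- two-step stabilization additivity of sink counts: fix instruction
stacks and particle locations. Stabilize the first batch `σ₁` on `{1,…,n}` via `seqA`,
then add the second batch `σ₂` (waking any sleepers it meets) and restabilize via `seqB`
(continuing the same instruction stacks). The total number of particles absorbed at the
sinks `0` and `n+1` equals the number absorbed when stabilizing `σ₁ + σ₂` at once. -/
theorem two_step_sink_additivity (n : ℕ) (I : ℤ → ℕ → ArwInstr) (σ₁ σ₂ : ℤ → ℕ)
    (hσ₁ : ∀ v : ℤ, v ∉ Set.Icc (1 : ℤ) n → σ₁ v = 0)
    (hσ₂ : ∀ v : ℤ, v ∉ Set.Icc (1 : ℤ) n → σ₂ v = 0)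
    -- stage 1: stabilize `σ₁` on `{1,…,n}`
    (seqA : List ℤ) (hA : Stabilizes I σ₁ (Set.Icc (1 : ℤ) n) seqA)
    -- stage 2: add `σ₂` to the resulting stable state and restabilize,
    -- continuing the instruction stacks from the stage-1 odometer
    (seqB : List ℤ) (hBin : ∀ v ∈ seqB, v ∈ Set.Icc (1 : ℤ) n)
    (hBlegal : LegalSeq I seqB (runArw I seqA (0, initState σ₁)).1
      (addParticles (runArw I seqA (0, initState σ₁)).2 σ₂))
    (hBstable : ∀ v ∈ Set.Icc (1 : ℤ) n,
      (runArw I seqB ((runArw I seqA (0, initState σ₁)).1,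
        addParticles (runArw I seqA (0, initState σ₁)).2 σ₂)).2.active v = 0)
    -- one-shot: stabilize `σ₁ + σ₂` from scratch
    (seqC : List ℤ) (hC : Stabilizes I (fun v => σ₁ v + σ₂ v) (Set.Icc (1 : ℤ) n) seqC) :
    sinkCount n (runArw I seqC (0, initState fun v => σ₁ v + σ₂ v)).2 =
      sinkCount n (runArw I seqB ((runArw I seqA (0, initState σ₁)).1,
        addParticles (runArw I seqA (0, initState σ₁)).2 σ₂)).2 := by
  
  obtain ⟨hAin, hAleg, hAstab⟩ := hA
  obtain ⟨hCin, hCleg, hCstab⟩ := hC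
  have hinit : initState (fun v => σ₁ v + σ₂ v) = addParticles (initState σ₁) σ₂ :=
    initState_add σ₁ σ₂
  obtain ⟨hAPrun, hAPleg⟩ := run_addP I σ₂ seqA 0 (initState σ₁) hAleg
  have hLleg : LegalSeq I (seqA ++ seqB) 0 (initState fun v => σ₁ v + σ₂ v) := by
    rw [hinit, legal_append]
    refine ⟨hAPleg, ?_⟩
    rw [hAPrun]
    exact hBlegal
  have hLrun : runArw I (seqA ++ seqB) (0, initState fun v => σ₁ v + σ₂ v)
      = runArw I seqB ((runArw I seqA (0, initState σ₁)).1,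
          addParticles (runArw I seqA (0, initState σ₁)).2 σ₂) := by
    rw [hinit, runArw_append, hAPrun]
  have hLin : ∀ x ∈ seqA ++ seqB, x ∈ Set.Icc (1 : ℤ) n := by
    intro x hx
    rcases List.mem_append.mp hx with h | h
    · exact hAin x h
    · exact hBin x h
  have hLstab : ∀ x ∈ Set.Icc (1 : ℤ) n,
      (runArw I (seqA ++ seqB) (0, initState fun v => σ₁ v + σ₂ v)).2.active x = 0 := by
    intro x hx
    rw [hLrun]
    exact hBstable x hx
  have key := arw_abelian I (Set.Icc (1 : ℤ) n) seqC 0 (initState fun v => σ₁ v + σ₂ v)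
    (seqA ++ seqB) hCin hCleg hCstab hLin hLleg hLstab
  rw [key, hLrun]
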